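/- Let F be a homeomorphism of 𝒜 = ℝ × [0,1] commuting with T(x,y)=(x+1,y) and with bounded displacement, and let 𝒦 ⊆ 𝒜 be a closed F-invariant and T-invariant set such that for some ε > 0 there is no periodic ε-chain for F|_𝒦. Then for every z ∈ 𝒦, the first coordinate pr₁(Fⁿ(z)) tends to +∞ or to −∞ as n → ∞. -/

import Mathlib

open Filter Topology

/-- The lifted annulus `𝒜 = ℝ × [0,1]`. -/
abbrev 𝒜 : Type := ℝ × (Set.Icc (0:ℝ) 1)

/-- The deck translation `T(x,y) = (x+1,y)`. -/
def T : 𝒜 → 𝒜 := fun z => (z.1 + 1, z.2)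

/-- An `ε`-chain of length `m` for `F` inside `𝒦`. -/
def IsChainIn (F : 𝒜 → 𝒜) (𝒦 : Set 𝒜) (ε : ℝ) (c : ℕ → 𝒜) (m : ℕ) : Prop :=
  (∀ i ≤ m, c i ∈ 𝒦) ∧ ∀ i < m, dist (F (c i)) (c (i+1)) < ε

/-- Let `F` be a homeomorphism of `ℝ × [0,1]` commuting with `T` and with bounded
displacement, and let `𝒦` be a closed `F`- and `T`-invariant set such that for some
`ε > 0` there is no periodic `ε`-chain for `F|𝒦`. Then for every `z ∈ 𝒦`, the first
coordinate of `Fⁿ(z)` tends to `+∞` or to `−∞` as `n → ∞`. -/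
theorem stmt_11 (F : 𝒜 ≃ₜ 𝒜) (hFT : ∀ z, F (T z) = T (F z))
    (hbd : ∃ B : ℝ, ∀ z : 𝒜, dist (F z) z ≤ B)
    (𝒦 : Set 𝒜) (hcl : IsClosed 𝒦) (hF : F '' 𝒦 = 𝒦) (hT : T '' 𝒦 = 𝒦)
    (hchain : ∃ ε > (0:ℝ), ∀ c : ℕ → 𝒜, ∀ m : ℕ, 1 ≤ m →
        IsChainIn (⇑F) 𝒦 ε c m → c m ≠ c 0) :
    ∀ z ∈ 𝒦, Tendsto (fun n : ℕ => ((⇑F)^[n] z).1) atTop atTop ∨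
      Tendsto (fun n : ℕ => ((⇑F)^[n] z).1) atTop atBot := by
  classical
  obtain ⟨B, hB⟩ := hbd
  obtain ⟨ε, hε, hch⟩ := hchain
  intro z hz
  set x : ℕ → ℝ := fun n => ((⇑F)^[n] z).1 with hxdef
  -- invariance of 𝒦 under F
  have hFmem : ∀ w ∈ 𝒦, F w ∈ 𝒦 := fun w hw => hF ▸ Set.mem_image_of_mem F hw
  have hiter : ∀ n, (⇑F)^[n] z ∈ 𝒦 := by
    intro n
    induction n with
    | zero => simpa using hz
    | succ n ih => rw [Function.iterate_succ_apply']; exact hFmem _ ih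
  have hB0 : 0 ≤ B := le_trans dist_nonneg (hB z)
  -- step bound
  have hstep : ∀ n, |x (n+1) - x n| ≤ B := by
    intro n
    have h1 : x (n+1) = (F ((⇑F)^[n] z)).1 := by
      simp [hxdef, Function.iterate_succ_apply']
    have h2 : dist (F ((⇑F)^[n] z)).1 ((⇑F)^[n] z).1 ≤ dist (F ((⇑F)^[n] z)) ((⇑F)^[n] z) :=
      (Prod.dist_eq (x := F ((⇑F)^[n] z)) (y := (⇑F)^[n] z)) ▸ le_max_left _ _
    have := le_trans h2 (hB _)
    rw [Real.dist_eq] at this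
    rw [h1]
    exact this
  by_contra hcon
  push_neg at hcon
  obtain ⟨hP, hQ⟩ := hcon
  -- frequently small / frequently large
  have h1 : ∃ M₁ : ℝ, ∃ᶠ n in atTop, x n < M₁ := by
    by_contra h
    push_neg at h
    exact hP (tendsto_atTop.mpr fun b => by
      have := h b
      exact this)
  have h2 : ∃ M₂ : ℝ, ∃ᶠ n in atTop, M₂ < x n := by
    by_contra h
    push_neg at h
    exact hQ (tendsto_atBot.mpr fun b => by
      have := h b
      exact this)
  obtain ⟨M₁, hM₁⟩ := h1
  obtain ⟨M₂, hM₂⟩ := h2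
  set A : ℝ := |M₁| + |M₂| + B + 1 with hAdef
  have hA0 : 0 ≤ A := by positivity
  have hM₁A : M₁ ≤ A := le_trans (le_abs_self _) (by nlinarith [abs_nonneg M₂])
  have hM₂A : -A ≤ M₂ := by
    have := neg_abs_le M₂
    nlinarith [abs_nonneg M₁]
  -- frequently in the compact strip
  have hAfreq : ∃ᶠ n in atTop, x n ∈ Set.Icc (-A) A := by
    by_contra hno
    rw [Filter.not_frequently] at hno
    obtain ⟨N, hN⟩ := Filter.eventually_atTop.mp hno
    -- a point on the right
    obtain ⟨n, ⟨hxn, hnN⟩⟩ := (hM₂.and_eventually (eventually_ge_atTop N)).exists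
    have hxnA : A < x n := by
      have hmem := hN n hnN
      by_contra h
      exact hmem ⟨le_trans hM₂A hxn.le, not_lt.mp h⟩
    -- a point on the left, later
    obtain ⟨m, ⟨hxm, hmN⟩⟩ :=
      (hM₁.and_eventually (eventually_ge_atTop (max N (n+1)))).exists
    have hmn : n < m := lt_of_lt_of_le (Nat.lt_succ_self n) (le_trans (le_max_right _ _) hmN)
    have hxmA : x m < -A := by
      have hmem := hN m (le_trans (le_max_left _ _) hmN)
      by_contra h
      exact hmem ⟨not_lt.mp h, le_trans hxm.le hM₁A⟩
    -- crossing
    have hex : ∃ k, x (n + k) < A := ⟨m - n, by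
      rw [Nat.add_sub_cancel' hmn.le]; linarith⟩
    set k := Nat.find hex with hkdef
    have hk : x (n + k) < A := Nat.find_spec hex
    have hkpos : k ≠ 0 := by
      intro h
      rw [h] at hk
      simp at hk
      linarith
    have hprev : ¬ x (n + (k - 1)) < A := Nat.find_min hex (Nat.pred_lt hkpos)
    have hsucc : n + k = (n + (k - 1)) + 1 := by omega
    have hb := hstep (n + (k - 1))
    rw [← hsucc] at hb
    have h1 : x (n + k) ≥ x (n + (k-1)) - B := by
      have := abs_le.mp hb
      linarith [this.1]
    have hmemIcc : x (n + k) ∈ Set.Icc (-A) A := by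
      constructor
      · have : A ≤ x (n + (k-1)) := not_lt.mp hprev
        have e1 := abs_nonneg M₁
        have e2 := abs_nonneg M₂
        linarith
      · exact hk.le
    exact hN (n + k) (le_trans hnN (Nat.le_add_right n k)) hmemIcc
  -- compactness and recurrence
  set K₀ : Set 𝒜 := 𝒦 ∩ (Set.Icc (-A) A ×ˢ (Set.univ : Set (Set.Icc (0:ℝ) 1))) with hK₀def
  have hKc : IsCompact K₀ := by
    have hc : IsCompact (Set.Icc (-A) A ×ˢ (Set.univ : Set (Set.Icc (0:ℝ) 1))) :=
      isCompact_Icc.prod isCompact_univ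
    exact hc.inter_left hcl
  obtain ⟨φ, hφ, hφmem⟩ := Filter.extraction_of_frequently_atTop hAfreq
  have humem : ∀ j, (⇑F)^[φ j] z ∈ K₀ := fun j =>
    ⟨hiter _, ⟨hφmem j, Set.mem_univ _⟩⟩
  obtain ⟨p, hp, ψ, hψ, hlim⟩ := hKc.tendsto_subseq humem
  have := (Metric.tendsto_atTop.mp hlim) (ε/2) (by linarith)
  obtain ⟨j₀, hj₀⟩ := this
  set n₀ := φ (ψ j₀) with hn₀def
  set n₁ := φ (ψ (j₀ + 1)) with hn₁def
  have hlt : n₀ < n₁ := hφ (hψ (Nat.lt_succ_self j₀))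
  have hd : dist ((⇑F)^[n₁] z) ((⇑F)^[n₀] z) < ε := by
    have d1 := hj₀ j₀ le_rfl
    have d2 := hj₀ (j₀ + 1) (Nat.le_succ _)
    calc dist ((⇑F)^[n₁] z) ((⇑F)^[n₀] z)
        ≤ dist ((⇑F)^[n₁] z) p + dist ((⇑F)^[n₀] z) p := dist_triangle_right _ _ _
      _ < ε/2 + ε/2 := add_lt_add d2 d1
      _ = ε := by ring
  -- build the periodic chain
  set L := n₁ - n₀ with hLdef
  have hL1 : 1 ≤ L := by omega
  set c : ℕ → 𝒜 := fun i => if i = L then (⇑F)^[n₀] z else (⇑F)^[n₀ + i] z with hcdef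
  have hc0 : c 0 = (⇑F)^[n₀] z := by
    simp only [hcdef]
    split <;> simp
  have hcL : c L = (⇑F)^[n₀] z := by simp [hcdef]
  have hchainIn : IsChainIn (⇑F) 𝒦 ε c L := by
    constructor
    · intro i _
      simp only [hcdef]
      split <;> exact hiter _
    · intro i hi
      have hci : c i = (⇑F)^[n₀ + i] z := by
        simp only [hcdef]
        rw [if_neg (by omega)]
      have hFci : F (c i) = (⇑F)^[n₀ + i + 1] z := by
        rw [hci, ← Function.iterate_succ_apply' F]
      by_cases h : i + 1 = L
      · have hcip : c (i+1) = (⇑F)^[n₀] z := by rw [h, hcL]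
        have : n₀ + i + 1 = n₁ := by omega
        rw [hFci, hcip, this]
        exact hd
      · have hcip : c (i+1) = (⇑F)^[n₀ + i + 1] z := by
          simp only [hcdef]
          rw [if_neg h, ← add_assoc]
        rw [hFci, hcip]
        simpa using hε
  exact hch c L hL1 hchainIn (hcL.trans hc0.symm)
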